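/- Let (b_N), (d_N), (b'_N), (d'_N) be non-decreasing sequences of positive integers with b_N·d_N = b'_N·d'_N = M_N for all N, where M_N → ∞, and let ϑ, ϑ' ∈ {−1, 1}. Write Γ_N = Γ_{b_N, d_N}^{(ϑ)} and Γ'_N = Γ_{b'_N, d'_N}^{(ϑ')}. If liminf_{N→∞} (1/M_N²) · #{ (i,j) ∈ [M_N]² : Γ_N(i,j) = Γ'_N(i,j) } > 0, then liminf_{N→∞} E[ tr( U_{M_N}^{Γ_N} (U_{M_N}^{Γ'_N})* ) ] > 0; in particular E[ tr( U_{M_N}^{Γ_N} (U_{M_N}^{Γ'_N})* ) ] does not converge to 0 (which witnesses that the partial transposes U_{M_N}^{Γ_N} and U_{M_N}^{Γ'_N} are not asymptotically *-free). -/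

import Mathlib

open Filter MeasureTheory Matrix

/-- The partial transpose `Γ_{b,d}^{(ϑ)} : [N]² → [N]²` for `N = b·d`, as an entry permutation.
Identifying `[N] ≃ [b] × [d]` via `i = a₁·d + a₂` (`0`-based), the right partial transpose
(`θ = true`, i.e. `ϑ = 1`) swaps `a₂` and `a₋₂`, while the left partial transpose (`θ = false`,
i.e. `ϑ = -1`) swaps `a₁` and `a₋₁`. -/
def pt {b d M : ℕ} (θ : Bool) (h : b * d = M) :
    Fin M × Fin M → Fin M × Fin M := fun x =>
  let e : Fin M ≃ Fin b × Fin d := (finCongr h).symm.trans finProdFinEquiv.symm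
  let u := e x.1
  let v := e x.2
  if θ then (e.symm (u.1, v.2), e.symm (v.1, u.2))
  else (e.symm (v.1, u.2), e.symm (u.1, v.2))

/-- For a map `σ : [N]² → [N]²`, `U^σ` is the matrix whose `(i,j)` entry is `U_{σ(i,j)}`. -/
def entryMap {N : ℕ} (σ : Fin N × Fin N → Fin N × Fin N)
    (U : Matrix (Fin N) (Fin N) ℂ) : Matrix (Fin N) (Fin N) ℂ :=
  Matrix.of fun i j => U (σ (i, j)).1 (σ (i, j)).2

noncomputable instance (N : ℕ) : MeasurableSpace (Matrix.unitaryGroup (Fin N) ℂ) := borel _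

instance (N : ℕ) : BorelSpace (Matrix.unitaryGroup (Fin N) ℂ) := ⟨rfl⟩

instance (N : ℕ) : MeasurableMul (Matrix.unitaryGroup (Fin N) ℂ) :=
  ⟨fun g => (continuous_mul_left g).measurable, fun g => (continuous_mul_right g).measurable⟩

lemma cont_entry {N : ℕ} (a b : Fin N) :
    Continuous fun U : Matrix.unitaryGroup (Fin N) ℂ => (U : Matrix (Fin N) (Fin N) ℂ) a b :=
  (continuous_apply b).comp ((continuous_apply a).comp continuous_subtype_val)

lemma integrable_entry_mul {N : ℕ} (μ : Measure (Matrix.unitaryGroup (Fin N) ℂ))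
    [IsProbabilityMeasure μ] (a b c d : Fin N) :
    Integrable (fun U : Matrix.unitaryGroup (Fin N) ℂ =>
      (U : Matrix (Fin N) (Fin N) ℂ) a b * star ((U : Matrix (Fin N) (Fin N) ℂ) c d)) μ := by
  refine ⟨(((cont_entry a b).mul ((cont_entry c d).star)).measurable).aestronglyMeasurable, ?_⟩
  refine HasFiniteIntegral.of_bounded (C := 1) (ae_of_all _ fun U => ?_)
  rw [norm_mul, norm_star]
  calc ‖(U : Matrix (Fin N) (Fin N) ℂ) a b‖ * ‖(U : Matrix (Fin N) (Fin N) ℂ) c d‖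
      ≤ 1 * 1 := by
        gcongr <;> exact entry_norm_bound_of_unitary U.2 _ _
    _ = 1 := one_mul 1

lemma F_offdiag {N : ℕ} (μ : Measure (Matrix.unitaryGroup (Fin N) ℂ))
    [μ.IsHaarMeasure] (a b c d : Fin N) (hac : a ≠ c) :
    ∫ U : Matrix.unitaryGroup (Fin N) ℂ,
      (U : Matrix (Fin N) (Fin N) ℂ) a b * star ((U : Matrix (Fin N) (Fin N) ℂ) c d) ∂μ = 0 := by
  set f : Matrix.unitaryGroup (Fin N) ℂ → ℂ := fun U =>
    (U : Matrix (Fin N) (Fin N) ℂ) a b * star ((U : Matrix (Fin N) (Fin N) ℂ) c d) with hf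
  set dg : Fin N → ℂ := fun k => if k = a then (-1 : ℂ) else 1 with hdg
  have hmem : Matrix.diagonal dg ∈ Matrix.unitaryGroup (Fin N) ℂ := by
    rw [Matrix.mem_unitaryGroup_iff, Matrix.star_eq_conjTranspose, Matrix.diagonal_conjTranspose,
      Matrix.diagonal_mul_diagonal]
    have hone : (fun i => dg i * star dg i) = fun _ : Fin N => (1 : ℂ) := by
      funext k
      by_cases h : k = a <;> simp [hdg, h]
    rw [hone]
    exact Matrix.diagonal_one
  set g : Matrix.unitaryGroup (Fin N) ℂ := ⟨Matrix.diagonal dg, hmem⟩ with hg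
  have key := integral_mul_left_eq_self (μ := μ) f g
  have hcomp : ∀ U : Matrix.unitaryGroup (Fin N) ℂ, f (g * U) = -(f U) := by
    intro U
    have h1 : ((g * U : Matrix.unitaryGroup (Fin N) ℂ) : Matrix (Fin N) (Fin N) ℂ)
        = Matrix.diagonal dg * (U : Matrix (Fin N) (Fin N) ℂ) := rfl
    simp only [hf, h1, Matrix.diagonal_mul]
    have hda : dg a = -1 := by simp [hdg]
    have hdc : dg c = 1 := by simp [hdg, (Ne.symm hac)]
    rw [hda, hdc, one_mul]
    ring
  rw [integral_congr_ae (ae_of_all _ hcomp), integral_neg] at key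
  have h2 : (∫ U, f U ∂μ) + ∫ U, f U ∂μ = 0 := by linear_combination -key
  exact add_self_eq_zero.mp h2

lemma perm_mem_unitaryGroup {N : ℕ} (σ : Equiv.Perm (Fin N)) :
    (σ.toPEquiv.toMatrix : Matrix (Fin N) (Fin N) ℂ) ∈ Matrix.unitaryGroup (Fin N) ℂ := by
  rw [Matrix.mem_unitaryGroup_iff, Matrix.star_eq_conjTranspose]
  have hstar : (σ.toPEquiv.toMatrix : Matrix (Fin N) (Fin N) ℂ)ᴴ
      = (σ⁻¹.toPEquiv.toMatrix : Matrix (Fin N) (Fin N) ℂ) := by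
    ext i j
    simp only [Matrix.conjTranspose_apply, PEquiv.toMatrix_apply, Equiv.toPEquiv_apply,
      Option.mem_def, Option.some.injEq]
    rw [apply_ite (star : ℂ → ℂ), star_one, star_zero]
    congr 1
    rw [eq_iff_iff]
    constructor
    · intro h; rw [← h]; simp
    · intro h; rw [← h]; simp
  rw [hstar, ← PEquiv.toMatrix_trans, ← Equiv.toPEquiv_trans]
  have : σ.trans σ⁻¹ = Equiv.refl (Fin N) := by
    ext x; simp
  rw [this, Equiv.toPEquiv_refl, PEquiv.toMatrix_refl]

lemma F_swap {N : ℕ} (μ : Measure (Matrix.unitaryGroup (Fin N) ℂ))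
    [μ.IsHaarMeasure] (a a' b d : Fin N) :
    ∫ U : Matrix.unitaryGroup (Fin N) ℂ,
      (U : Matrix (Fin N) (Fin N) ℂ) a b * star ((U : Matrix (Fin N) (Fin N) ℂ) a d) ∂μ
    = ∫ U : Matrix.unitaryGroup (Fin N) ℂ,
      (U : Matrix (Fin N) (Fin N) ℂ) a' b * star ((U : Matrix (Fin N) (Fin N) ℂ) a' d) ∂μ := by
  set σ : Equiv.Perm (Fin N) := Equiv.swap a a' with hσ
  set f : Matrix.unitaryGroup (Fin N) ℂ → ℂ := fun U =>
    (U : Matrix (Fin N) (Fin N) ℂ) a b * star ((U : Matrix (Fin N) (Fin N) ℂ) a d) with hf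
  set g : Matrix.unitaryGroup (Fin N) ℂ := ⟨σ.toPEquiv.toMatrix, perm_mem_unitaryGroup σ⟩ with hg
  have key := integral_mul_left_eq_self (μ := μ) f g
  have hcomp : ∀ U : Matrix.unitaryGroup (Fin N) ℂ, f (g * U) =
      (U : Matrix (Fin N) (Fin N) ℂ) a' b * star ((U : Matrix (Fin N) (Fin N) ℂ) a' d) := by
    intro U
    have h1 : ((g * U : Matrix.unitaryGroup (Fin N) ℂ) : Matrix (Fin N) (Fin N) ℂ)
        = σ.toPEquiv.toMatrix * (U : Matrix (Fin N) (Fin N) ℂ) := rfl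
    simp only [hf, h1, PEquiv.toMatrix_toPEquiv_mul, Matrix.submatrix_apply, id_eq]
    rw [hσ]
    simp [Equiv.swap_apply_left]
  rw [integral_congr_ae (ae_of_all _ hcomp)] at key
  exact key.symm

lemma F_value {N : ℕ} (μ : Measure (Matrix.unitaryGroup (Fin N) ℂ))
    [μ.IsHaarMeasure] [IsProbabilityMeasure μ] (a b c d : Fin N) :
    ∫ U : Matrix.unitaryGroup (Fin N) ℂ,
      (U : Matrix (Fin N) (Fin N) ℂ) a b * star ((U : Matrix (Fin N) (Fin N) ℂ) c d) ∂μ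
    = if a = c ∧ b = d then (N : ℂ)⁻¹ else 0 := by
  by_cases hac : a = c
  · subst hac
    have hsum : ∑ a' : Fin N, ∫ U : Matrix.unitaryGroup (Fin N) ℂ,
        (U : Matrix (Fin N) (Fin N) ℂ) a' b * star ((U : Matrix (Fin N) (Fin N) ℂ) a' d) ∂μ
        = if b = d then 1 else 0 := by
      rw [← integral_finset_sum _ (fun a' _ => integrable_entry_mul μ a' b a' d)]
      have hU : ∀ U : Matrix.unitaryGroup (Fin N) ℂ,
          ∑ a' : Fin N, (U : Matrix (Fin N) (Fin N) ℂ) a' b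
            * star ((U : Matrix (Fin N) (Fin N) ℂ) a' d) = if b = d then 1 else 0 := by
        intro U
        have h1 := Matrix.UnitaryGroup.star_mul_self U
        have h3 : (star (U : Matrix (Fin N) (Fin N) ℂ) * (U : Matrix (Fin N) (Fin N) ℂ)) d b
            = (1 : Matrix (Fin N) (Fin N) ℂ) d b := by rw [h1]
        rw [Matrix.mul_apply] at h3
        simp only [Matrix.star_apply] at h3
        rw [Matrix.one_apply] at h3
        calc ∑ a' : Fin N, (U : Matrix (Fin N) (Fin N) ℂ) a' b
              * star ((U : Matrix (Fin N) (Fin N) ℂ) a' d)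
            = ∑ a' : Fin N, star ((U : Matrix (Fin N) (Fin N) ℂ) a' d)
              * (U : Matrix (Fin N) (Fin N) ℂ) a' b := by
              exact Finset.sum_congr rfl fun a' _ => mul_comm _ _
          _ = if d = b then 1 else 0 := h3
          _ = if b = d then 1 else 0 := by rw [if_congr eq_comm rfl rfl]
      rw [integral_congr_ae (ae_of_all _ hU)]
      simp
    have hconst : ∑ a' : Fin N, ∫ U : Matrix.unitaryGroup (Fin N) ℂ,
        (U : Matrix (Fin N) (Fin N) ℂ) a' b * star ((U : Matrix (Fin N) (Fin N) ℂ) a' d) ∂μ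
        = (N : ℂ) * ∫ U : Matrix.unitaryGroup (Fin N) ℂ,
          (U : Matrix (Fin N) (Fin N) ℂ) a b * star ((U : Matrix (Fin N) (Fin N) ℂ) a d) ∂μ := by
      rw [Finset.sum_congr rfl fun a' _ => F_swap μ a' a b d]
      simp [Finset.sum_const, nsmul_eq_mul]
    rw [hconst] at hsum
    have hNpos : 0 < N := Fin.pos a
    have hNne : (N : ℂ) ≠ 0 := by exact_mod_cast Nat.cast_ne_zero.mpr hNpos.ne'
    simp only [eq_self_iff_true, true_and]
    by_cases hbd : b = d
    · simp only [if_pos hbd] at hsum ⊢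
      exact eq_inv_of_mul_eq_one_right hsum
    · simp only [if_neg hbd] at hsum ⊢
      rcases mul_eq_zero.mp hsum with h | h
      · exact absurd h hNne
      · exact h
  · rw [F_offdiag μ a b c d hac, if_neg (by tauto)]

lemma integral_trace_eq {N : ℕ} (μ : Measure (Matrix.unitaryGroup (Fin N) ℂ))
    [μ.IsHaarMeasure] [IsProbabilityMeasure μ]
    (Γ Γ' : Fin N × Fin N → Fin N × Fin N) :
    ∫ U : Matrix.unitaryGroup (Fin N) ℂ,
      (entryMap Γ (U : Matrix (Fin N) (Fin N) ℂ)
        * (entryMap Γ' (U : Matrix (Fin N) (Fin N) ℂ))ᴴ).trace / (N : ℂ) ∂μ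
    = ((Finset.univ.filter fun x : Fin N × Fin N => Γ x = Γ' x).card : ℂ) / (N : ℂ) ^ 2 := by
  have htr : ∀ U : Matrix.unitaryGroup (Fin N) ℂ,
      (entryMap Γ (U : Matrix (Fin N) (Fin N) ℂ)
        * (entryMap Γ' (U : Matrix (Fin N) (Fin N) ℂ))ᴴ).trace / (N : ℂ)
      = ∑ p : Fin N × Fin N,
          ((U : Matrix (Fin N) (Fin N) ℂ) (Γ p).1 (Γ p).2
            * star ((U : Matrix (Fin N) (Fin N) ℂ) (Γ' p).1 (Γ' p).2)) / (N : ℂ) := by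
    intro U
    rw [Fintype.sum_prod_type]
    simp only [← Finset.sum_div]
    congr 1
  rw [integral_congr_ae (ae_of_all _ htr),
    integral_finset_sum _ (fun p _ => (integrable_entry_mul μ (Γ p).1 (Γ p).2 (Γ' p).1
      (Γ' p).2).div_const _)]
  have hterm : ∀ p : Fin N × Fin N,
      (∫ U : Matrix.unitaryGroup (Fin N) ℂ,
        ((U : Matrix (Fin N) (Fin N) ℂ) (Γ p).1 (Γ p).2
          * star ((U : Matrix (Fin N) (Fin N) ℂ) (Γ' p).1 (Γ' p).2)) / (N : ℂ) ∂μ)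
      = if Γ p = Γ' p then ((N : ℂ) ^ 2)⁻¹ else 0 := by
    intro p
    rw [integral_div, F_value μ]
    by_cases h : Γ p = Γ' p
    · rw [if_pos h, if_pos ⟨congrArg Prod.fst h, congrArg Prod.snd h⟩,
        div_eq_mul_inv, ← mul_inv, sq]
    · rw [if_neg h, if_neg (fun hc => h (Prod.ext_iff.mpr hc)), zero_div]
  rw [Finset.sum_congr rfl fun p _ => hterm p, ← Finset.sum_filter, Finset.sum_const,
    nsmul_eq_mul, div_eq_mul_inv]

/-- for non-decreasing sequences of positive integers with
`b_N·d_N = b'_N·d'_N = M_N → ∞` and `ϑ, ϑ' ∈ {−1,1}` (encoded by `θ, θ' : Bool`), writing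
`Γ_N = Γ_{b_N,d_N}^{(ϑ)}` and `Γ'_N = Γ_{b'_N,d'_N}^{(ϑ')}`: if
`liminf (1/M_N²)·#{(i,j) : Γ_N(i,j) = Γ'_N(i,j)} > 0`, then
`liminf E[tr(U_{M_N}^{Γ_N}(U_{M_N}^{Γ'_N})*)] > 0`; in particular this expectation does not
converge to `0` (witnessing failure of asymptotic `*`-freeness). -/
theorem stmt_6 (b d b' d' M : ℕ → ℕ)
    (hbm : Monotone b) (hdm : Monotone d) (hb'm : Monotone b') (hd'm : Monotone d')
    (hb : ∀ n, 0 < b n) (hd : ∀ n, 0 < d n) (hb' : ∀ n, 0 < b' n) (hd' : ∀ n, 0 < d' n)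
    (hM : ∀ n, b n * d n = M n) (hM' : ∀ n, b' n * d' n = M n)
    (hMtop : Tendsto M atTop atTop) (θ θ' : Bool)
    (μ : ∀ n, Measure (Matrix.unitaryGroup (Fin (M n)) ℂ))
    (hμ : ∀ n, (μ n).IsHaarMeasure) (hμp : ∀ n, IsProbabilityMeasure (μ n))
    (hliminf : 0 < liminf
      (fun n => ((Finset.univ.filter fun x : Fin (M n) × Fin (M n) =>
          pt θ (hM n) x = pt θ' (hM' n) x).card : ℝ) / (M n : ℝ) ^ 2)
      atTop) :
    0 < liminf
        (fun n => (∫ U : Matrix.unitaryGroup (Fin (M n)) ℂ,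
          (entryMap (pt θ (hM n)) (U : Matrix (Fin (M n)) (Fin (M n)) ℂ)
            * (entryMap (pt θ' (hM' n)) (U : Matrix (Fin (M n)) (Fin (M n)) ℂ))ᴴ).trace
              / (M n : ℂ) ∂(μ n)).re)
        atTop
    ∧ ¬ Tendsto
        (fun n => ∫ U : Matrix.unitaryGroup (Fin (M n)) ℂ,
          (entryMap (pt θ (hM n)) (U : Matrix (Fin (M n)) (Fin (M n)) ℂ)
            * (entryMap (pt θ' (hM' n)) (U : Matrix (Fin (M n)) (Fin (M n)) ℂ))ᴴ).trace
              / (M n : ℂ) ∂(μ n))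
        atTop (nhds 0) := by
  have key : ∀ n, (∫ U : Matrix.unitaryGroup (Fin (M n)) ℂ,
      (entryMap (pt θ (hM n)) (U : Matrix (Fin (M n)) (Fin (M n)) ℂ)
        * (entryMap (pt θ' (hM' n)) (U : Matrix (Fin (M n)) (Fin (M n)) ℂ))ᴴ).trace
          / (M n : ℂ) ∂(μ n))
      = ((Finset.univ.filter fun x : Fin (M n) × Fin (M n) =>
          pt θ (hM n) x = pt θ' (hM' n) x).card : ℂ) / (M n : ℂ) ^ 2 := by
    intro n
    haveI := hμ n
    haveI := hμp n
    exact integral_trace_eq (μ n) _ _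
  have hre : (fun n => (∫ U : Matrix.unitaryGroup (Fin (M n)) ℂ,
      (entryMap (pt θ (hM n)) (U : Matrix (Fin (M n)) (Fin (M n)) ℂ)
        * (entryMap (pt θ' (hM' n)) (U : Matrix (Fin (M n)) (Fin (M n)) ℂ))ᴴ).trace
          / (M n : ℂ) ∂(μ n)).re)
      = fun n => ((Finset.univ.filter fun x : Fin (M n) × Fin (M n) =>
          pt θ (hM n) x = pt θ' (hM' n) x).card : ℝ) / (M n : ℝ) ^ 2 := by
    funext n
    rw [key n]
    have hcast : ((Finset.univ.filter fun x : Fin (M n) × Fin (M n) =>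
          pt θ (hM n) x = pt θ' (hM' n) x).card : ℂ) / (M n : ℂ) ^ 2
        = ((((Finset.univ.filter fun x : Fin (M n) × Fin (M n) =>
          pt θ (hM n) x = pt θ' (hM' n) x).card : ℝ) / (M n : ℝ) ^ 2 : ℝ) : ℂ) := by
      push_cast
      ring
    rw [hcast, Complex.ofReal_re]
  constructor
  · rw [hre]
    exact hliminf
  · intro h
    have h2 : Tendsto (fun n => (∫ U : Matrix.unitaryGroup (Fin (M n)) ℂ,
        (entryMap (pt θ (hM n)) (U : Matrix (Fin (M n)) (Fin (M n)) ℂ)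
          * (entryMap (pt θ' (hM' n)) (U : Matrix (Fin (M n)) (Fin (M n)) ℂ))ᴴ).trace
            / (M n : ℂ) ∂(μ n)).re) atTop (nhds 0) := by
      simpa [Function.comp_def] using (Complex.continuous_re.tendsto 0).comp h
    rw [hre] at h2
    rw [h2.liminf_eq] at hliminf
    exact lt_irrefl 0 hliminf
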